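/- Let G be a finite simple odd-hole-free graph, let u be a vertex of G, let k be a positive integer with χ(G) > k, and let c be a proper coloring of G − u with k colors. Then for any two distinct colors i and j that are each assigned by c to at least one neighbor of u, there exist adjacent vertices v, w ∈ N(u) with c(v) = i and c(w) = j. -/

import Mathlib

open SimpleGraph

lemma myLengthDrop {V : Type*} {G : SimpleGraph V} {u v : V} (p : G.Walk u v) :
    ∀ n, (p.drop n).length = p.length - n := by
  induction p with
  | nil => intro n; cases n <;> simp [SimpleGraph.Walk.drop]
  | cons h q ih =>
    intro n
    cases n with
    | zero => simp [SimpleGraph.Walk.drop]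
    | succ n =>
      simp only [SimpleGraph.Walk.drop, SimpleGraph.Walk.length_copy,
        SimpleGraph.Walk.length_cons, ih n]
      exact (ih n).trans (by omega)

lemma myGetVertInj {V : Type*} {G : SimpleGraph V} {u v : V} {p : G.Walk u v} (hp : p.IsPath) :
    ∀ s t, s ≤ p.length → t ≤ p.length → p.getVert s = p.getVert t → s = t := by
  induction p with
  | nil => intro s t hs ht _; simp at hs ht; omega
  | cons h q ih =>
    rw [SimpleGraph.Walk.cons_isPath_iff] at hp
    intro s t hs ht heq
    match s, t with
    | 0, 0 => rfl
    | 0, t+1 =>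
      exfalso
      apply hp.2
      rw [SimpleGraph.Walk.mem_support_iff_exists_getVert]
      refine ⟨t, ?_, by simpa using ht⟩
      simpa [SimpleGraph.Walk.getVert_cons_succ] using heq.symm
    | s+1, 0 =>
      exfalso
      apply hp.2
      rw [SimpleGraph.Walk.mem_support_iff_exists_getVert]
      refine ⟨s, ?_, by simpa using hs⟩
      simpa [SimpleGraph.Walk.getVert_cons_succ] using heq
    | s+1, t+1 =>
      have := ih hp.1 s t (by simpa using hs) (by simpa using ht)
        (by simpa [SimpleGraph.Walk.getVert_cons_succ] using heq)
      omega

lemma myCycAdj {n : ℕ} (s t : Fin (n+2)) :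
    (cycleGraph (n+2)).Adj s t ↔
      (s.val + 1 = t.val ∨ t.val + 1 = s.val ∨ (s.val = 0 ∧ t.val = n+1) ∨
        (t.val = 0 ∧ s.val = n+1)) := by
  rw [SimpleGraph.cycleGraph_adj]
  have hs := s.isLt
  have ht := t.isLt
  constructor
  · rintro (h | h)
    · have : s = 1 + t := by rwa [sub_eq_iff_eq_add] at h
      have hv : s.val = (1 + t.val) % (n+2) := by rw [this, Fin.val_add, Fin.val_one]
      rcases Nat.lt_or_ge (1 + t.val) (n+2) with h' | h'
      · rw [Nat.mod_eq_of_lt h'] at hv; omega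
      · have : t.val = n + 1 := by omega
        rw [this] at hv
        simp [Nat.add_comm 1 (n+1)] at hv
        have hv' : s.val = 0 := by simp [hv]
        omega
    · have : t = 1 + s := by rwa [sub_eq_iff_eq_add] at h
      have hv : t.val = (1 + s.val) % (n+2) := by rw [this, Fin.val_add, Fin.val_one]
      rcases Nat.lt_or_ge (1 + s.val) (n+2) with h' | h'
      · rw [Nat.mod_eq_of_lt h'] at hv; omega
      · have : s.val = n + 1 := by omega
        rw [this] at hv
        simp [Nat.add_comm 1 (n+1)] at hv
        have hv' : t.val = 0 := by simp [hv]
        omega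
  · intro h
    rcases h with h | h | h | h
    · right; rw [sub_eq_iff_eq_add]
      apply Fin.ext
      rw [Fin.val_add, Fin.val_one, Nat.add_comm 1 s.val, h, Nat.mod_eq_of_lt ht]
    · left; rw [sub_eq_iff_eq_add]
      apply Fin.ext
      rw [Fin.val_add, Fin.val_one, Nat.add_comm 1 t.val, h, Nat.mod_eq_of_lt hs]
    · left; rw [sub_eq_iff_eq_add]
      apply Fin.ext
      rw [Fin.val_add, Fin.val_one, h.2, h.1]
      simp [Nat.add_comm 1 (n+1)]
    · right; rw [sub_eq_iff_eq_add]
      apply Fin.ext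
      rw [Fin.val_add, Fin.val_one, h.2, h.1]
      simp [Nat.add_comm 1 (n+1)]

/-- The subgraph of `G` induced by the vertices other than `u` colored `i` or `j`. -/
def auxH {V : Type*} (G : SimpleGraph V) (u : V) {k : ℕ} (c : V → Fin k) (i j : Fin k) :
    SimpleGraph V where
  Adj x y := (x ≠ u ∧ (c x = i ∨ c x = j)) ∧ (y ≠ u ∧ (c y = i ∨ c y = j)) ∧ G.Adj x y
  symm := ⟨fun x y h => ⟨h.2.1, h.1, h.2.2.symm⟩⟩
  loopless := ⟨fun x h => G.loopless.irrefl x h.2.2⟩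

lemma auxH_adj {V : Type*} {G : SimpleGraph V} {u : V} {k : ℕ} {c : V → Fin k} {i j : Fin k}
    {x y : V} : (auxH G u c i j).Adj x y ↔
      ((x ≠ u ∧ (c x = i ∨ c x = j)) ∧ (y ≠ u ∧ (c y = i ∨ c y = j)) ∧ G.Adj x y) := Iff.rfl

lemma case1 {V : Type*} (G : SimpleGraph V) (u : V) {k : ℕ} (c : V → Fin k)
    (hc : ∀ v w, v ≠ u → w ≠ u → G.Adj v w → c v ≠ c w) (i j : Fin k) (hij : i ≠ j)
    (hcase : ¬ ∃ a b, (G.Adj u a ∧ c a = i) ∧ (G.Adj u b ∧ c b = j) ∧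
      (auxH G u c i j).Reachable a b) :
    G.Colorable k := by
  classical
  set H := auxH G u c i j with hH
  set Q : V → Prop := fun x => (x ≠ u ∧ (c x = i ∨ c x = j)) ∧
    ∃ a, G.Adj u a ∧ c a = i ∧ H.Reachable a x with hQ
  set c' : V → Fin k := fun x => if x = u then i else if Q x then Equiv.swap i j (c x) else c x
    with hc'
  have hc'u : c' u = i := by simp [hc']
  have claim2 : ∀ w, w ≠ u → G.Adj u w → c' w ≠ i := by
    intro w hwu hadj
    simp only [hc', if_neg hwu]
    by_cases hQw : Q w
    · rw [if_pos hQw]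
      rcases hQw.1.2 with h | h
      · rw [h, Equiv.swap_apply_left]; exact Ne.symm hij
      · exact absurd ⟨_, w, ⟨hQw.2.choose_spec.1, hQw.2.choose_spec.2.1⟩, ⟨hadj, h⟩,
          hQw.2.choose_spec.2.2⟩ hcase
    · rw [if_neg hQw]
      intro hcw
      exact hQw ⟨⟨hwu, Or.inl hcw⟩, w, hadj, hcw, SimpleGraph.Reachable.refl w⟩
  have claim1 : ∀ x y, G.Adj x y → x ≠ u → y ≠ u → Q x → ¬ Q y → c' x ≠ c' y := by
    intro x y hadj hxu hyu hQx hQy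
    have hyS : ¬ (y ≠ u ∧ (c y = i ∨ c y = j)) := by
      intro hyS
      exact hQy ⟨hyS, hQx.2.choose, hQx.2.choose_spec.1, hQx.2.choose_spec.2.1,
        hQx.2.choose_spec.2.2.trans (SimpleGraph.Adj.reachable (auxH_adj.mpr ⟨hQx.1, hyS, hadj⟩))⟩
    have hycol : c y ≠ i ∧ c y ≠ j := by
      have : ¬ (c y = i ∨ c y = j) := fun h => hyS ⟨hyu, h⟩
      push_neg at this; exact this
    simp only [hc', if_neg hxu, if_neg hyu, if_pos hQx, if_neg hQy]
    rcases hQx.1.2 with h | h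
    · rw [h, Equiv.swap_apply_left]; exact fun he => hycol.2 he.symm
    · rw [h, Equiv.swap_apply_right]; exact fun he => hycol.1 he.symm
  refine ⟨SimpleGraph.Coloring.mk c' ?_⟩
  intro x y hadj
  by_cases hxu : x = u
  · have hadj' : G.Adj u y := hxu ▸ hadj
    have hyu : y ≠ u := fun h => G.loopless.irrefl u (h ▸ hadj')
    rw [hxu, hc'u]
    exact fun h => claim2 y hyu hadj' h.symm
  · by_cases hyu : y = u
    · have hadj' : G.Adj u x := hyu ▸ hadj.symm
      rw [hyu, hc'u]
      exact claim2 x hxu hadj'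
    · by_cases hQx : Q x
      · by_cases hQy : Q y
        · simp only [hc', if_neg hxu, if_neg hyu, if_pos hQx, if_pos hQy]
          exact (Equiv.swap i j).injective.ne (hc x y hxu hyu hadj)
        · exact claim1 x y hadj hxu hyu hQx hQy
      · by_cases hQy : Q y
        · exact (claim1 y x hadj.symm hyu hxu hQy hQx).symm
        · simp only [hc', if_neg hxu, if_neg hyu, if_neg hQx, if_neg hQy]
          exact hc x y hxu hyu hadj

/-- `G` has an *odd hole*: an induced cycle of odd length at least 5
(a hole is an induced cycle of length at least 4, so odd holes have length at least 5). -/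
def SimpleGraph.HasOddHole {V : Type*} (G : SimpleGraph V) : Prop :=
  ∃ n : ℕ, Odd n ∧ 5 ≤ n ∧ Nonempty (SimpleGraph.cycleGraph n ↪g G)

/-- Let `G` be odd-hole-free with `χ(G) > k`, and let `c` be a proper
`k`-coloring of `G - u`.  For any two distinct colors `i, j` each used on a neighbour of `u`,
there are adjacent neighbours `v, w` of `u` with `c v = i` and `c w = j`. -/
theorem statement_6 {V : Type*} [Fintype V] (G : SimpleGraph V)
    (hfree : ¬ G.HasOddHole) (u : V) (k : ℕ) (hk : 0 < k)
    (hχ : (k : ℕ∞) < G.chromaticNumber)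
    (c : V → Fin k) (hc : ∀ v w, v ≠ u → w ≠ u → G.Adj v w → c v ≠ c w)
    (i j : Fin k) (hij : i ≠ j)
    (hi : ∃ v, G.Adj u v ∧ c v = i) (hj : ∃ w, G.Adj u w ∧ c w = j) :
    ∃ v w, G.Adj u v ∧ G.Adj u w ∧ G.Adj v w ∧ c v = i ∧ c w = j := by
  classical
  set H := auxH G u c i j with hH
  by_cases hcase : ∃ a b, (G.Adj u a ∧ c a = i) ∧ (G.Adj u b ∧ c b = j) ∧ H.Reachable a b
  swap
  · exact absurd (case1 G u c hc i j hij hcase).chromaticNumber_le (not_le.mpr hχ)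
  obtain ⟨a0, b0, ha0, hb0, ⟨q0⟩⟩ := hcase
  have hPne : ∃ n : ℕ, ∃ a b, (G.Adj u a ∧ c a = i) ∧ (G.Adj u b ∧ c b = j) ∧
      ∃ q : H.Walk a b, q.length = n := ⟨q0.length, a0, b0, ha0, hb0, q0, rfl⟩
  set d := Nat.find hPne with hd
  have hmin : ∀ (a' b' : V) (q : H.Walk a' b'), G.Adj u a' → c a' = i → G.Adj u b' →
      c b' = j → d ≤ q.length := fun a' b' q h1 h2 h3 h4 =>
    Nat.find_min' hPne ⟨a', b', ⟨h1, h2⟩, ⟨h3, h4⟩, q, rfl⟩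
  obtain ⟨a, b, ⟨hua, hca⟩, ⟨hub, hcb⟩, q1, hq1⟩ := Nat.find_spec hPne
  obtain ⟨p, hpPath, hplen⟩ : ∃ pp : H.Walk a b, pp.IsPath ∧ pp.length = d :=
    ⟨q1.bypass, q1.bypass_isPath, le_antisymm (by rw [hd, ← hq1]; exact q1.length_bypass_le)
      (hmin a b q1.bypass hua hca hub hcb)⟩
  have hga : p.getVert 0 = a := p.getVert_zero
  have hgb : p.getVert d = b := by rw [← hplen]; exact p.getVert_length
  have hd1 : 1 ≤ d := by
    rcases Nat.eq_zero_or_pos d with h | h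
    · exfalso
      have : a = b := SimpleGraph.Walk.eq_of_length_eq_zero (by rw [hplen, h])
      exact hij (hca ▸ this ▸ hcb ▸ rfl)
    · exact h
  have hadjH : ∀ t, t < d → H.Adj (p.getVert t) (p.getVert (t+1)) := by
    intro t ht
    exact p.adj_getVert_succ (by rw [hplen]; exact ht)
  have hS : ∀ t, t ≤ d → p.getVert t ≠ u ∧ (c (p.getVert t) = i ∨ c (p.getVert t) = j) := by
    intro t ht
    rcases Nat.lt_or_ge t d with h | h
    · exact (auxH_adj.mp (hadjH t h)).1
    · have htd : t = d := le_antisymm ht h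
      have h2 := auxH_adj.mp (hadjH (d-1) (by omega))
      rw [show d - 1 + 1 = d by omega] at h2
      rw [htd]
      exact h2.2.1
  -- color alternation
  have halt : ∀ t, t ≤ d → c (p.getVert t) = (if Even t then i else j) := by
    intro t
    induction t with
    | zero => intro _; simp [hga, hca]
    | succ t ih =>
      intro ht
      have h1 := ih (by omega)
      have h2 := auxH_adj.mp (hadjH t (by omega))
      have hne : c (p.getVert t) ≠ c (p.getVert (t+1)) := hc _ _ h2.1.1 h2.2.1.1 h2.2.2
      by_cases he : Even t
      · rw [if_pos he] at h1
        rw [if_neg (by simp [Nat.even_add_one, he])]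
        rcases h2.2.1.2 with h | h
        · exact absurd (h1.trans h.symm) hne
        · exact h
      · rw [if_neg he] at h1
        rw [if_pos (by simp [Nat.even_add_one, he])]
        rcases h2.2.1.2 with h | h
        · exact h
        · exact absurd (h1.trans h.symm) hne
  -- no chords
  have hnochord : ∀ s t, s + 1 < t → t ≤ d → ¬ G.Adj (p.getVert s) (p.getVert t) := by
    intro s t hst htd hadj
    have hHadj : H.Adj (p.getVert s) (p.getVert t) :=
      auxH_adj.mpr ⟨hS s (by omega), hS t htd, hadj⟩
    have e1 : p.reverse.getVert (d - s) = p.getVert s := by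
      rw [SimpleGraph.Walk.getVert_reverse, hplen, show d - (d - s) = s by omega]
    have hlen : ((((p.reverse.drop (d - s)).reverse.copy rfl e1).append
        (SimpleGraph.Walk.cons hHadj (p.drop t)))).length = s + 1 + (d - t) := by
      simp [SimpleGraph.Walk.length_append, SimpleGraph.Walk.length_copy,
        SimpleGraph.Walk.length_reverse, myLengthDrop, hplen]
      omega
    have := hmin a b ((((p.reverse.drop (d - s)).reverse.copy rfl e1).append
        (SimpleGraph.Walk.cons hHadj (p.drop t)))) hua hca hub hcb
    rw [hlen] at this
    omega
  -- u is not adjacent to interior vertices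
  have hnou : ∀ t, 1 ≤ t → t ≤ d - 1 → ¬ G.Adj u (p.getVert t) := by
    intro t h1 h2 hadj
    rcases (hS t (by omega)).2 with h | h
    · have := hmin (p.getVert t) b (p.drop t) hadj h hub hcb
      rw [myLengthDrop, hplen] at this
      omega
    · have e1 : p.reverse.getVert (d - t) = p.getVert t := by
        rw [SimpleGraph.Walk.getVert_reverse, hplen, show d - (d - t) = t by omega]
      have := hmin a (p.getVert t) ((p.reverse.drop (d - t)).reverse.copy rfl e1)
        hua hca hadj h
      rw [SimpleGraph.Walk.length_copy, SimpleGraph.Walk.length_reverse,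
        myLengthDrop, SimpleGraph.Walk.length_reverse, hplen] at this
      omega
  -- case d = 1 : done
  rcases Nat.lt_or_ge d 2 with hd2 | hd2
  · have hd1' : d = 1 := by omega
    have h2 := auxH_adj.mp (hadjH 0 (by omega))
    rw [show (0:ℕ) + 1 = d by omega, hga, hgb] at h2
    exact ⟨a, b, hua, hub, h2.2.2, hca, hcb⟩
  -- case d ≥ 2 : odd hole, contradiction
  exfalso
  have hodd : ¬ Even d := by
    intro he
    have := halt d le_rfl
    rw [if_pos he, hgb, hcb] at this
    exact hij this.symm
  have hd3 : 3 ≤ d := by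
    rcases Nat.even_or_odd d with h | h
    · exact absurd h hodd
    · obtain ⟨m, hm⟩ := h; omega
  apply hfree
  refine ⟨d + 2, ?_, by omega, ⟨⟨⟨fun s => if s.val = 0 then u else p.getVert (s.val - 1), ?_⟩,
    ?_⟩⟩⟩
  · rcases Nat.even_or_odd d with h | h
    · exact absurd h hodd
    · obtain ⟨m, hm⟩ := h
      exact ⟨m + 1, by omega⟩
  · -- injectivity
    intro s t hst
    simp only at hst
    have hs := s.isLt
    have ht := t.isLt
    split_ifs at hst with h1 h2 h2
    · exact Fin.ext (by omega)
    · exact absurd hst.symm (hS (t.val - 1) (by omega)).1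
    · exact absurd hst (hS (s.val - 1) (by omega)).1
    · have := myGetVertInj hpPath (s.val - 1) (t.val - 1) (by rw [hplen]; omega)
        (by rw [hplen]; omega) hst
      exact Fin.ext (by omega)
  · -- adjacency iff
    intro s t
    show G.Adj (if s.val = 0 then u else p.getVert (s.val - 1))
      (if t.val = 0 then u else p.getVert (t.val - 1)) ↔ _
    have hs := s.isLt
    have ht := t.isLt
    rw [myCycAdj]
    constructor
    · -- G adjacency implies cycle adjacency
      intro hadj
      by_contra hcyc
      push_neg at hcyc
      obtain ⟨hc1, hc2, hc3, hc4⟩ := hcyc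
      by_cases h1 : s.val = 0
      · by_cases h2 : t.val = 0
        · rw [if_pos h1, if_pos h2] at hadj
          exact G.loopless.irrefl u hadj
        · rw [if_pos h1, if_neg h2] at hadj
          have ht1 : t.val ≠ 1 := by omega
          have htd : t.val ≠ d + 1 := hc3 h1
          exact hnou (t.val - 1) (by omega) (by omega) hadj
      · by_cases h2 : t.val = 0
        · rw [if_neg h1, if_pos h2] at hadj
          have hs1 : s.val ≠ 1 := by omega
          have hsd : s.val ≠ d + 1 := hc4 h2
          exact hnou (s.val - 1) (by omega) (by omega) hadj.symm
        · rw [if_neg h1, if_neg h2] at hadj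
          rcases Nat.lt_trichotomy (s.val - 1) (t.val - 1) with h | h | h
          · exact hnochord (s.val - 1) (t.val - 1) (by omega) (by omega) hadj
          · rw [h] at hadj
            exact G.loopless.irrefl _ hadj
          · exact hnochord (t.val - 1) (s.val - 1) (by omega) (by omega) hadj.symm
    · -- cycle adjacency implies G adjacency
      intro hcyc
      rcases hcyc with h | h | h | h
      · by_cases h1 : s.val = 0
        · rw [if_pos h1, if_neg (by omega), show t.val - 1 = 0 by omega, hga]
          exact hua
        · rw [if_neg h1, if_neg (by omega)]
          have h2 := auxH_adj.mp (hadjH (s.val - 1) (by omega))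
          rw [show s.val - 1 + 1 = t.val - 1 by omega] at h2
          exact h2.2.2
      · by_cases h1 : t.val = 0
        · rw [if_pos h1, if_neg (by omega), show s.val - 1 = 0 by omega, hga]
          exact hua.symm
        · rw [if_neg h1, if_neg (by omega)]
          have h2 := auxH_adj.mp (hadjH (t.val - 1) (by omega))
          rw [show t.val - 1 + 1 = s.val - 1 by omega] at h2
          exact h2.2.2.symm
      · rw [if_pos h.1, if_neg (by omega), show t.val - 1 = d by omega, hgb]
        exact hub
      · rw [if_pos h.1, if_neg (by omega), show s.val - 1 = d by omega, hgb]
        exact hub.symm
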